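/- For an even cycle C_n (n ≥ 4 even), the number of mutual-visibility sets of cardinality 3 equals (n−2)n(n+8)/24. -/

import Mathlib

open SimpleGraph Polynomial

/-- Two vertices `u`, `v` are `X`-visible in `G` if some shortest `u`\u2013`v` path
has no internal vertex in `X`. -/
def SimpleGraph.XVisible {V : Type*} (G : SimpleGraph V) (X : Set V) (u v : V) : Prop :=
  ∃ p : G.Walk u v, p.IsPath ∧ p.length = G.dist u v ∧
    ∀ w ∈ p.support, w ∈ X → w = u ∨ w = v

/-- `X` is a mutual-visibility set of `G`. -/
def SimpleGraph.IsMutualVisibilitySet {V : Type*} (G : SimpleGraph V) (X : Set V) : Prop :=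
  ∀ u ∈ X, ∀ v ∈ X, G.XVisible X u v


open scoped Classical in
/-- The number of mutual-visibility sets of cardinality 3 (the maximum) in the cycle `C_n`. -/
noncomputable def rmuC (n : ℕ) : ℕ :=
  (Finset.univ.filter (fun X : Finset (Fin n) =>
    X.card = 3 ∧ (cycleGraph n).IsMutualVisibilitySet ↑X)).card

open Fin.CommRing

variable {n : ℕ} [NeZero n]

lemma fin_sub_val (a b : Fin n) :
    (a - b).val = if b.val ≤ a.val then a.val - b.val else a.val + n - b.val := by
  rw [Fin.sub_def]
  rcases le_or_gt b.val a.val with h | h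
  · simp only [h, if_true]
    have : n - b.val + a.val = n + (a.val - b.val) := by omega
    rw [this, Nat.add_mod_left, Nat.mod_eq_of_lt (by omega)]
  · simp only [not_le.2 h, if_false]
    rw [Nat.mod_eq_of_lt (by omega)]
    omega

lemma fin_one_val (hn : 2 ≤ n) : (1 : Fin n).val = 1 := by
  rw [Fin.val_one']; exact Nat.mod_eq_of_lt hn

lemma fin_sub_eq_zero_iff {a b : Fin n} : (a - b).val = 0 ↔ a = b := by
  rw [fin_sub_val]
  constructor
  · intro h
    ext
    have := a.isLt; have := b.isLt
    split at h <;> omega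
  · rintro rfl; simp

lemma fin_sub_add_sub {a b : Fin n} (h : a ≠ b) : (a - b).val + (b - a).val = n := by
  have hv : a.val ≠ b.val := fun hh => h (Fin.ext hh)
  have := a.isLt; have := b.isLt
  rw [fin_sub_val, fin_sub_val]
  split <;> split <;> omega

set_option linter.unusedSectionVars false

lemma fin_val_add_one (hn : 2 ≤ n) (x : Fin n) :
    (x + 1).val = if x.val = n - 1 then 0 else x.val + 1 := by
  have h1 : (1 : Fin n).val = 1 := fin_one_val hn
  have h2 : (x + 1).val = (x.val + 1) % n := by
    rw [Fin.add_def, h1]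
  rw [h2]
  have := x.isLt
  split
  · next h => rw [h]; simp [Nat.sub_add_cancel (by omega : 1 ≤ n)]
  · next h => exact Nat.mod_eq_of_lt (by omega)

lemma fin_val_sub_one (hn : 2 ≤ n) (x : Fin n) :
    (x - 1).val = if x.val = 0 then n - 1 else x.val - 1 := by
  rw [fin_sub_val, fin_one_val hn]
  have := x.isLt
  split <;> split <;> omega

lemma fin_val_natCast (k : ℕ) (hk : k < n) : ((k : Fin n)).val = k :=
  Fin.val_cast_of_lt hk

lemma fin_add_nat_val (a : Fin n) (k : ℕ) (hk : k < n) :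
    (a + (k : Fin n)).val = (a.val + k) % n := by
  rw [Fin.add_def, fin_val_natCast k hk]


lemma fin_sub_add_cast (a : Fin n) (k : ℕ) (hk : k < n) :
    (a + (k : Fin n) - a).val = k := by
  have : a + (k : Fin n) - a = (k : Fin n) := by ring
  rw [this, fin_val_natCast k hk]

lemma fin_add_inj (a : Fin n) {i j : ℕ} (hi : i < n) (hj : j < n)
    (h : a + (i : Fin n) = a + (j : Fin n)) : i = j := by
  have h2 : (i : Fin n) = (j : Fin n) := by
    have := add_left_cancel h; exact this
  have := congrArg Fin.val h2
  rwa [fin_val_natCast i hi, fin_val_natCast j hj] at this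

lemma cycle_adj_up (hn : 2 ≤ n) (a : Fin n) : (cycleGraph n).Adj a (a + 1) := by
  rw [cycleGraph_adj']
  right
  have : a + 1 - a = 1 := by ring
  rw [this, fin_one_val hn]

/-- Walk going "up" the cycle from `a` of length `k`. -/
def walkUp (hn : 2 ≤ n) (a : Fin n) : (k : ℕ) → (cycleGraph n).Walk a (a + (k : Fin n))
  | 0 => SimpleGraph.Walk.nil.copy rfl (by simp)
  | (k+1) => ((walkUp hn a k).concat
      (show (cycleGraph n).Adj (a + (k : Fin n)) (a + (k : Fin n) + 1) from
        cycle_adj_up hn _)).copy rfl (by push_cast; ring)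

lemma walkUp_length (hn : 2 ≤ n) (a : Fin n) (k : ℕ) : (walkUp hn a k).length = k := by
  induction k with
  | zero =>
      simp [walkUp, List.range_succ]
  | succ k ih => simp [walkUp, SimpleGraph.Walk.length_concat, ih]

lemma walkUp_support (hn : 2 ≤ n) (a : Fin n) (k : ℕ) :
    (walkUp hn a k).support = (List.range (k+1)).map (fun (i : ℕ) => a + (i : Fin n)) := by
  induction k with
  | zero =>
      simp [walkUp, List.range_succ]
  | succ k ih =>
      rw [walkUp]
      rw [SimpleGraph.Walk.support_copy, SimpleGraph.Walk.support_concat, ih,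
        List.range_succ (n := k+1), List.map_append]
      congr 1
      rw [List.map_cons, List.map_nil]
      congr 1
      push_cast
      ring

lemma walkUp_isPath (hn : 2 ≤ n) (a : Fin n) (k : ℕ) (hk : k < n) :
    (walkUp hn a k).IsPath := by
  apply SimpleGraph.Walk.IsPath.mk'
  rw [walkUp_support]
  refine List.Nodup.map_on ?_ List.nodup_range
  intro i hi j hj hij
  rw [List.mem_range] at hi hj
  exact fin_add_inj a (by omega) (by omega) hij

lemma walkUp_mem_support (hn : 2 ≤ n) (a : Fin n) (k : ℕ) {w : Fin n} :
    w ∈ (walkUp hn a k).support ↔ ∃ i ≤ k, w = a + (i : Fin n) := by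
  rw [walkUp_support]
  simp only [List.mem_map, List.mem_range]
  constructor
  · rintro ⟨i, hi, rfl⟩; exact ⟨i, by omega, rfl⟩
  · rintro ⟨i, hi, rfl⟩; exact ⟨i, by omega, rfl⟩

/-- lower bound on walk lengths in the cycle -/
lemma cycle_walk_lb (hn : 2 ≤ n) : ∀ {u v : Fin n} (p : (cycleGraph n).Walk u v),
    min (v - u).val (u - v).val ≤ p.length := by
  intro u v p
  induction p with
  | nil => simp [fin_sub_eq_zero_iff.2 rfl]
  | @cons u w v h q ih =>
      rw [SimpleGraph.Walk.length_cons]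
      rw [cycleGraph_adj'] at h
      by_cases hwv : w = v
      · subst hwv
        -- q : Walk w v with w = v; target : min (v-u) (u-v) ≤ q.length + 1
        rcases h with h | h
        · -- (u - w).val = 1, so (w - u).val = n - 1
          have huw : u ≠ w := by
            intro hh; subst hh; rw [fin_sub_eq_zero_iff.2 rfl] at h; omega
          have h2 := fin_sub_add_sub huw
          omega
        · have huw : w ≠ u := by
            intro hh; subst hh; rw [fin_sub_eq_zero_iff.2 rfl] at h; omega
          have h2 := fin_sub_add_sub huw
          omega
      · have hA : (v - w).val + (w - v).val = n := fin_sub_add_sub (Ne.symm hwv)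
        rcases h with h | h
        · -- u - w = 1, so w = u - 1 : v - u = (v - w) - 1, u - v = (w - v) + 1
          have hw : w = u - 1 := by
            have : u - w = 1 := Fin.ext (by rw [h, fin_one_val hn])
            have := sub_eq_iff_eq_add.mp this
            rw [this]; ring
          subst hw
          have e1 : v - u = (v - (u-1)) - 1 := by ring
          have e2 : u - v = ((u-1) - v) + 1 := by ring
          rw [e1, e2, fin_val_sub_one hn, fin_val_add_one hn]
          have h3 := ((u:Fin n) - 1 - v).isLt
          have h4 := (v - ((u:Fin n) - 1)).isLt
          split <;> split <;> omega
        · -- w - u = 1, w = u + 1 : v - u = (v - w) + 1, u - v = (w - v) - 1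
          have hw : w = u + 1 := by
            have : w - u = 1 := Fin.ext (by rw [h, fin_one_val hn])
            have := sub_eq_iff_eq_add.mp this
            rw [this]; ring
          subst hw
          have e1 : v - u = (v - (u+1)) + 1 := by ring
          have e2 : u - v = ((u+1) - v) - 1 := by ring
          rw [e1, e2, fin_val_sub_one hn, fin_val_add_one hn]
          have h3 := ((u:Fin n) + 1 - v).isLt
          have h4 := (v - ((u:Fin n) + 1)).isLt
          split <;> split <;> omega

lemma cycle_dist (hn : 2 ≤ n) (u v : Fin n) :
    (cycleGraph n).dist u v = min (v - u).val (u - v).val := by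
  apply le_antisymm
  · rcases eq_or_ne u v with rfl | huv
    · simp [fin_sub_eq_zero_iff.2 rfl]
    · have hsum := fin_sub_add_sub huv
      have h1 : (cycleGraph n).dist u v ≤ (v - u).val := by
        have hlt : (v - u).val < n := (v - u).isLt
        have hend : u + (((v - u).val : ℕ) : Fin n) = v := by
          rw [Fin.cast_val_eq_self]; ring
        have := SimpleGraph.dist_le ((walkUp hn u ((v-u).val)).copy rfl hend)
        rwa [SimpleGraph.Walk.length_copy, walkUp_length] at this
      have h2 : (cycleGraph n).dist u v ≤ (u - v).val := by
        have hend : v + (((u - v).val : ℕ) : Fin n) = u := by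
          rw [Fin.cast_val_eq_self]; ring
        have := SimpleGraph.dist_le
          (((walkUp hn v ((u-v).val)).copy rfl hend).reverse)
        rwa [SimpleGraph.Walk.length_reverse, SimpleGraph.Walk.length_copy,
          walkUp_length] at this
      omega
  · obtain ⟨p, hp⟩ := SimpleGraph.Reachable.exists_walk_length_eq_dist
      (cycleGraph_preconnected u v)
    rw [← hp]
    exact cycle_walk_lb hn p

/-- if a walk in the cycle has length `(u-v).val < n/2`, its support is forced:
it is the "descending" path. -/
lemma cycle_walk_support_forced (hn : 2 ≤ n) : ∀ {u v : Fin n}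
    (p : (cycleGraph n).Walk u v), p.length = (u - v).val → 2 * p.length < n →
    p.support = (List.range (p.length + 1)).map (fun (i : ℕ) => u - (i : Fin n)) := by
  intro u v p
  induction p with
  | nil =>
      intro _ _
      simp [List.range_succ]
  | @cons u w v h q ih =>
      intro hlen hsmall
      rw [SimpleGraph.Walk.length_cons] at hlen hsmall ⊢
      set L := q.length with hL
      have huv : u ≠ v := by
        intro hh; subst hh; rw [fin_sub_eq_zero_iff.2 rfl] at hlen; omega
      have hsum := fin_sub_add_sub huv
      rw [cycleGraph_adj'] at h
      have hw : w = u - 1 := by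
        rcases h with h | h
        · have : u - w = 1 := Fin.ext (by rw [h, fin_one_val hn])
          have h2 := sub_eq_iff_eq_add.mp this
          rw [h2]; ring
        · -- w = u + 1 : contradiction
          exfalso
          have hwu : w = u + 1 := by
            have : w - u = 1 := Fin.ext (by rw [h, fin_one_val hn])
            have h2 := sub_eq_iff_eq_add.mp this
            rw [h2]; ring
          subst hwu
          have hlb := cycle_walk_lb hn q
          have e1 : v - (u + 1) = (v - u) - 1 := by ring
          have e2 : (u + 1) - v = (u - v) + 1 := by ring
          rw [e1, e2, fin_val_sub_one hn, fin_val_add_one hn] at hlb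
          have h3 := ((u : Fin n) - v).isLt
          split at hlb <;> split at hlb <;> omega
      subst hw
      have hq : L = ((u - 1) - v).val := by
        have e : (u - 1) - v = (u - v) - 1 := by ring
        rw [e, fin_val_sub_one hn]
        split
        · omega
        · omega
      have ihh := ih hq (by omega)
      rw [SimpleGraph.Walk.support_cons, ihh]
      rw [List.range_succ_eq_map, List.range_succ_eq_map, List.map_cons,
        List.map_cons, List.map_map, List.map_map]
      congr 1
      · norm_num
      · rw [List.range_succ_eq_map, List.map_cons, List.map_map]
        congr 1
        · show u - 1 - ((0:ℕ) : Fin n) = u - ((1:ℕ) : Fin n)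
          push_cast
          ring
        · apply List.map_congr_left
          intro i _
          show u - 1 - ((i+1 : ℕ) : Fin n) = u - ((i + 1 + 1:ℕ) : Fin n)
          push_cast
          ring

lemma xvisible_refl (X : Set (Fin n)) (u : Fin n) :
    (cycleGraph n).XVisible X u u := by
  refine ⟨SimpleGraph.Walk.nil, SimpleGraph.Walk.IsPath.nil, by simp [SimpleGraph.dist_self], ?_⟩
  intro w hw _
  simp only [SimpleGraph.Walk.support_nil, List.mem_singleton] at hw
  exact Or.inl hw

lemma xvisible_symm {X : Set (Fin n)} {u v : Fin n}
    (h : (cycleGraph n).XVisible X u v) : (cycleGraph n).XVisible X v u := by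
  obtain ⟨p, hp, hlen, hav⟩ := h
  refine ⟨p.reverse, hp.reverse, ?_, ?_⟩
  · rw [SimpleGraph.Walk.length_reverse, hlen, SimpleGraph.dist_comm]
  · intro w hw hwX
    rw [SimpleGraph.Walk.support_reverse, List.mem_reverse] at hw
    exact (hav w hw hwX).symm

lemma visible_of (hn : 2 ≤ n) (u v t : Fin n) (X : Set (Fin n))
    (hX : X ⊆ {u, v, t}) (hk1 : 1 ≤ (v - u).val) (hk2 : 2 * (v - u).val ≤ n)
    (ht : (v - u).val < (t - u).val) : (cycleGraph n).XVisible X u v := by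
  set k := (v - u).val with hk
  have hkn : k < n := (v - u).isLt
  have huv : u ≠ v := by
    rintro rfl
    rw [hk, sub_self] at hk1
    simp at hk1
  have hend : u + ((k : ℕ) : Fin n) = v := by rw [hk, Fin.cast_val_eq_self]; ring
  refine ⟨(walkUp hn u k).copy rfl hend, ?_, ?_, ?_⟩
  · rw [SimpleGraph.Walk.isPath_copy]
    exact walkUp_isPath hn u k hkn
  · rw [SimpleGraph.Walk.length_copy, walkUp_length, cycle_dist hn]
    have hsum := fin_sub_add_sub huv
    omega
  · intro w hw hwX
    rw [SimpleGraph.Walk.support_copy, walkUp_mem_support] at hw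
    obtain ⟨i, hi, rfl⟩ := hw
    rcases hX hwX with h | h | h
    · exact Or.inl h
    · exact Or.inr h
    · exfalso
      have : (t - u).val = i := by
        rw [← h]; exact fin_sub_add_cast u i (by omega)
      omega

lemma not_visible (hn : 2 ≤ n) (u v t : Fin n) (X : Set (Fin n)) (ht : t ∈ X)
    (hk : n < 2 * (v - u).val) (h1 : 0 < (u - t).val)
    (h2 : (u - t).val < (u - v).val) : ¬ (cycleGraph n).XVisible X u v := by
  rintro ⟨p, hpath, hlen, hav⟩
  have huv : u ≠ v := by
    intro hh; subst hh; rw [fin_sub_eq_zero_iff.2 rfl] at hk; omega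
  have hsum := fin_sub_add_sub huv
  have hplen : p.length = (u - v).val := by
    rw [hlen, cycle_dist hn]; omega
  have hforced := cycle_walk_support_forced hn p hplen (by omega)
  have htmem : t ∈ p.support := by
    rw [hforced, List.mem_map]
    refine ⟨(u - t).val, ?_, ?_⟩
    · rw [List.mem_range]; omega
    · rw [Fin.cast_val_eq_self]; ring
  rcases hav t htmem ht with h | h
  · subst h; rw [fin_sub_eq_zero_iff.2 rfl] at h1; omega
  · subst h
    omega


section triple

lemma val_ba (a : Fin n) (x : ℕ) (hxn : x < n) : (a + (x : Fin n) - a).val = x :=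
  fin_sub_add_cast a x hxn

lemma val_cb (a : Fin n) (x y : ℕ) (hyn : y < n) :
    (a + ((x + y : ℕ) : Fin n) - (a + (x : Fin n))).val = y := by
  have e : a + ((x + y : ℕ) : Fin n) - (a + (x : Fin n))
      = (a + (x:Fin n)) + ((y:ℕ) : Fin n) - (a + (x:Fin n)) := by
    push_cast; ring
  rw [e]
  exact fin_sub_add_cast _ y hyn

lemma val_ab (a : Fin n) (x : ℕ) (hx : 1 ≤ x) (hxn : x < n) :
    (a - (a + (x : Fin n))).val = n - x := by
  have h1 := val_ba (n := n) a x hxn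
  have hne : a + (x : Fin n) ≠ a := by
    intro hh
    rw [hh, sub_self] at h1
    simp at h1; omega
  have := fin_sub_add_sub (a := a) (b := a + (x : Fin n)) (Ne.symm hne)
  omega

lemma val_ca (a : Fin n) (x y : ℕ) (hxyn : x + y < n) :
    (a + ((x + y : ℕ) : Fin n) - a).val = x + y :=
  fin_sub_add_cast a (x+y) hxyn

lemma val_ac (a : Fin n) (x y : ℕ) (hxy : 1 ≤ x + y) (hxyn : x + y < n) :
    (a - (a + ((x+y : ℕ) : Fin n))).val = n - (x + y) := by
  have h1 := val_ca (n := n) a x y hxyn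
  have hne : a + ((x+y:ℕ) : Fin n) ≠ a := by
    intro hh
    rw [hh, sub_self] at h1
    simp at h1; omega
  have := fin_sub_add_sub (a := a) (b := a + ((x+y:ℕ) : Fin n)) (Ne.symm hne)
  omega

lemma val_bc (a : Fin n) (x y : ℕ) (hy : 1 ≤ y) (hyn : y < n) :
    ((a + (x : Fin n)) - (a + ((x+y : ℕ) : Fin n))).val = n - y := by
  have h1 := val_cb (n := n) a x y hyn
  have hne : a + ((x+y:ℕ) : Fin n) ≠ a + (x : Fin n) := by
    intro hh
    rw [hh, sub_self] at h1
    simp at h1; omega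
  have := fin_sub_add_sub (Ne.symm hne)
  omega

lemma mv_triple_iff (hn : 2 ≤ n) (a : Fin n) (x y z : ℕ)
    (hx : 1 ≤ x) (hy : 1 ≤ y) (hz : 1 ≤ z) (hsum : x + y + z = n)
    (X : Set (Fin n))
    (hX : X = {a, a + (x : Fin n), a + ((x + y : ℕ) : Fin n)}) :
    (cycleGraph n).IsMutualVisibilitySet X ↔ (2*x ≤ n ∧ 2*y ≤ n ∧ 2*z ≤ n) := by
  set b := a + (x : Fin n) with hb
  set c := a + ((x + y : ℕ) : Fin n) with hc
  have vba : (b - a).val = x := val_ba a x (by omega)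
  have vca : (c - a).val = x + y := val_ca a x y (by omega)
  have vcb : (c - b).val = y := val_cb a x y (by omega)
  have vab : (a - b).val = n - x := val_ab a x hx (by omega)
  have vac : (a - c).val = z := by
    have := val_ac (n := n) a x y (by omega) (by omega)
    rw [← hc] at this
    rw [this]; omega
  have vbc : (b - c).val = n - y := val_bc a x y hy (by omega)
  have haX : a ∈ X := by rw [hX]; left; rfl
  have hbX : b ∈ X := by rw [hX]; right; left; rfl
  have hcX : c ∈ X := by rw [hX]; right; right; rfl
  constructor
  · intro hMV
    refine ⟨?_, ?_, ?_⟩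
    · by_contra hcon
      exact not_visible hn a b c X hcX (by omega) (by omega) (by omega)
        (hMV a haX b hbX)
    · by_contra hcon
      exact not_visible hn b c a X haX (by omega) (by omega) (by omega)
        (hMV b hbX c hcX)
    · by_contra hcon
      exact not_visible hn c a b X hbX (by omega) (by omega) (by omega)
        (hMV c hcX a haX)
  · rintro ⟨h2x, h2y, h2z⟩
    have vis_ab : (cycleGraph n).XVisible X a b :=
      visible_of hn a b c X (by rw [hX]) (by omega) (by omega) (by omega)
    have vis_bc : (cycleGraph n).XVisible X b c :=
      visible_of hn b c a X (by
          rw [hX]; intro w hw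
          simp only [Set.mem_insert_iff, Set.mem_singleton_iff] at hw ⊢
          tauto)
        (by omega) (by omega) (by omega)
    have vis_ca : (cycleGraph n).XVisible X c a :=
      visible_of hn c a b X (by
          rw [hX]; intro w hw
          simp only [Set.mem_insert_iff, Set.mem_singleton_iff] at hw ⊢
          tauto)
        (by omega) (by omega) (by omega)
    intro u hu v hv
    rw [hX] at hu hv
    rcases hu with rfl | rfl | hu <;> rcases hv with rfl | rfl | hv
    · exact xvisible_refl X _
    · exact vis_ab
    · rw [Set.mem_singleton_iff] at hv; subst hv; exact xvisible_symm vis_ca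
    · exact xvisible_symm vis_ab
    · exact xvisible_refl X _
    · rw [Set.mem_singleton_iff] at hv; subst hv; exact vis_bc
    · rw [Set.mem_singleton_iff] at hu; subst hu; exact vis_ca
    · rw [Set.mem_singleton_iff] at hu; subst hu; exact xvisible_symm vis_bc
    · rw [Set.mem_singleton_iff] at hu hv; subst hu; subst hv
      exact xvisible_refl X _

end triple

lemma exists_rep (hn : 2 ≤ n) (X : Finset (Fin n)) (h3 : X.card = 3) :
    ∃ (a : Fin n) (x y z : ℕ), 1 ≤ x ∧ 1 ≤ y ∧ 1 ≤ z ∧ x + y + z = n ∧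
      X = {a, a + (x : Fin n), a + ((x + y : ℕ) : Fin n)} := by
  obtain ⟨a, b, c, hab, hac, hbc, rfl⟩ := Finset.card_eq_three.mp h3
  set x₀ := (b - a).val with hx0
  set y₀ := (c - b).val with hy0
  set z₀ := (a - c).val with hz0
  have hx1 : 1 ≤ x₀ := by
    have := fin_sub_eq_zero_iff (a := b) (b := a)
    rcases Nat.eq_zero_or_pos x₀ with h | h
    · exact absurd (this.mp h) (Ne.symm hab)
    · omega
  have hy1 : 1 ≤ y₀ := by
    have := fin_sub_eq_zero_iff (a := c) (b := b)
    rcases Nat.eq_zero_or_pos y₀ with h | h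
    · exact absurd (this.mp h) (Ne.symm hbc)
    · omega
  have hz1 : 1 ≤ z₀ := by
    have := fin_sub_eq_zero_iff (a := a) (b := c)
    rcases Nat.eq_zero_or_pos z₀ with h | h
    · exact absurd (this.mp h) hac
    · omega
  have hxn := (b - a).isLt
  have hyn := (c - b).isLt
  have hzn := (a - c).isLt
  have hsum0 : x₀ + y₀ + z₀ = n ∨ x₀ + y₀ + z₀ = 2 * n := by
    have hz : ((b - a) + (c - b)) + (a - c) = 0 := by ring
    have h1 : ((b - a) + (c - b)).val = (x₀ + y₀) % n := Fin.val_add _ _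
    have h2 : (((b - a) + (c - b)) + (a - c)).val
        = ((x₀ + y₀) % n + z₀) % n := by rw [Fin.val_add, h1]
    rw [hz] at h2
    have h3' : (0 : Fin n).val = 0 := rfl
    rw [h3'] at h2
    rcases Nat.lt_or_ge (x₀ + y₀) n with h | h
    · rw [Nat.mod_eq_of_lt h] at h2
      rcases Nat.lt_or_ge (x₀ + y₀ + z₀) n with h' | h'
      · rw [Nat.mod_eq_of_lt h'] at h2; omega
      · have : (x₀ + y₀ + z₀) % n = x₀ + y₀ + z₀ - n := by
          rw [Nat.mod_eq_sub_mod h', Nat.mod_eq_of_lt (by omega)]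
        omega
    · have hmod : (x₀ + y₀) % n = x₀ + y₀ - n := by
        rw [Nat.mod_eq_sub_mod h, Nat.mod_eq_of_lt (by omega)]
      rw [hmod] at h2
      have hlt : x₀ + y₀ - n + z₀ < 2 * n := by omega
      rcases Nat.lt_or_ge (x₀ + y₀ - n + z₀) n with h' | h'
      · rw [Nat.mod_eq_of_lt h'] at h2; omega
      · have : (x₀ + y₀ - n + z₀) % n = x₀ + y₀ - n + z₀ - n := by
          rw [Nat.mod_eq_sub_mod h', Nat.mod_eq_of_lt (by omega)]
        omega
  have cast_b : a + ((x₀ : ℕ) : Fin n) = b := by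
    rw [hx0, Fin.cast_val_eq_self]; ring
  have cast_cb : b + ((y₀ : ℕ) : Fin n) = c := by
    rw [hy0, Fin.cast_val_eq_self]; ring
  have cast_ca : c + ((z₀ : ℕ) : Fin n) = a := by
    rw [hz0, Fin.cast_val_eq_self]; ring
  rcases hsum0 with hs | hs
  · refine ⟨a, x₀, y₀, z₀, hx1, hy1, hz1, hs, ?_⟩
    have : a + ((x₀ + y₀ : ℕ) : Fin n) = c := by
      push_cast
      rw [← add_assoc, cast_b, ← cast_cb]
    rw [cast_b, this]
  · -- reversed orientation: use gaps (n - z₀, n - y₀, n - x₀) starting at a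
    have e1 : (c - a).val = n - z₀ := by
      have := fin_sub_add_sub hac; omega
    have e2 : (b - c).val = n - y₀ := by
      have := fin_sub_add_sub (Ne.symm hbc); omega
    have e3 : (a - b).val = n - x₀ := by
      have := fin_sub_add_sub hab; omega
    refine ⟨a, n - z₀, n - y₀, n - x₀, by omega, by omega, by omega, by omega, ?_⟩
    have cb : a + (((n - z₀) : ℕ) : Fin n) = c := by
      rw [← e1, Fin.cast_val_eq_self]; ring
    have cc : a + (((n - z₀) + (n - y₀) : ℕ) : Fin n) = b := by
      push_cast
      rw [← add_assoc, cb]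
      rw [← e2, Fin.cast_val_eq_self]; ring
    rw [cb, cc]
    ext w
    simp only [Finset.mem_insert, Finset.mem_singleton]
    tauto

lemma rep_unique (a : Fin n) (x y z x' y' : ℕ)
    (hx : 1 ≤ x) (hy : 1 ≤ y) (hz : 1 ≤ z) (hsum : x + y + z = n)
    (hx' : 1 ≤ x') (hy' : 1 ≤ y') (hxy' : x' + y' < n)
    (hset : ({a, a + ((x' : ℕ) : Fin n), a + ((x' + y' : ℕ) : Fin n)} : Finset (Fin n))
      = {a, a + ((x : ℕ) : Fin n), a + ((x + y : ℕ) : Fin n)}) :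
    x' = x ∧ y' = y := by
  have hxn : x < n := by omega
  have hxyn : x + y < n := by omega
  have hab : a + ((x : ℕ) : Fin n) ≠ a := by
    intro hh
    have := val_ba (n := n) a x hxn
    rw [hh, sub_self] at this
    simp at this; omega
  have hac : a + ((x + y : ℕ) : Fin n) ≠ a := by
    intro hh
    have := val_ca (n := n) a x y hxyn
    rw [hh, sub_self] at this
    simp at this; omega
  -- b = a + x is in the LHS
  have hbmem : a + ((x : ℕ) : Fin n)
      ∈ ({a, a + ((x' : ℕ) : Fin n), a + ((x' + y' : ℕ) : Fin n)} : Finset (Fin n)) := by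
    rw [hset]; simp
  have hcmem : a + ((x + y : ℕ) : Fin n)
      ∈ ({a, a + ((x' : ℕ) : Fin n), a + ((x' + y' : ℕ) : Fin n)} : Finset (Fin n)) := by
    rw [hset]; simp
  simp only [Finset.mem_insert, Finset.mem_singleton] at hbmem hcmem
  rcases hbmem with hb | hb | hb
  · exact absurd hb hab
  · -- a + x = a + x' hence x = x'
    have hxx : x = x' := fin_add_inj a hxn (by omega) hb
    subst hxx
    rcases hcmem with hc | hc | hc
    · exact absurd hc hac
    · -- a + (x+y) = a + x: y = 0 contradiction
      have := fin_add_inj a hxyn hxn hc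
      omega
    · have := fin_add_inj a hxyn hxy' hc
      omega
  · -- a + x = a + (x'+y') : x = x' + y'
    have hxx : x = x' + y' := fin_add_inj a hxn hxy' hb
    rcases hcmem with hc | hc | hc
    · exact absurd hc hac
    · have := fin_add_inj a hxyn (by omega) hc
      omega
    · have := fin_add_inj a hxyn hxy' hc
      omega

lemma rot_eq (a : Fin n) (x y z : ℕ) (hsum : x + y + z = n) :
    ({a + ((x : ℕ) : Fin n), (a + ((x : ℕ) : Fin n)) + ((y : ℕ) : Fin n),
        (a + ((x : ℕ) : Fin n)) + ((y + z : ℕ) : Fin n)} : Finset (Fin n))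
      = {a, a + ((x : ℕ) : Fin n), a + ((x + y : ℕ) : Fin n)} := by
  have e1 : (a + ((x : ℕ) : Fin n)) + ((y : ℕ) : Fin n) = a + ((x + y : ℕ) : Fin n) := by
    push_cast; ring
  have e2 : (a + ((x : ℕ) : Fin n)) + ((y + z : ℕ) : Fin n) = a := by
    have hc : ((x + (y + z) : ℕ) : Fin n) = 0 := by
      rw [show x + (y + z) = n by omega, Fin.natCast_self]
    calc (a + ((x : ℕ) : Fin n)) + ((y + z : ℕ) : Fin n)
        = a + ((x + (y + z) : ℕ) : Fin n) := by push_cast; ring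
      _ = a := by rw [hc, add_zero]
  rw [e1, e2]
  ext w
  simp only [Finset.mem_insert, Finset.mem_singleton]
  tauto

lemma add_cast_ne (a : Fin n) (x : ℕ) (hx : 1 ≤ x) (hxn : x < n) :
    a + ((x : ℕ) : Fin n) ≠ a := by
  intro hh
  have := val_ba (n := n) a x hxn
  rw [hh, sub_self] at this
  simp at this; omega

lemma triple_card (a : Fin n) (x y : ℕ) (hx : 1 ≤ x) (hy : 1 ≤ y) (hxyn : x + y < n) :
    ({a, a + ((x : ℕ) : Fin n), a + ((x + y : ℕ) : Fin n)} : Finset (Fin n)).card = 3 := by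
  refine Finset.card_eq_three.mpr ⟨a, a + ((x : ℕ) : Fin n), a + ((x + y : ℕ) : Fin n),
    ?_, ?_, ?_, rfl⟩
  · exact (add_cast_ne a x hx (by omega)).symm
  · exact (add_cast_ne a (x+y) (by omega) hxyn).symm
  · intro hh
    have := fin_add_inj a (by omega : x < n) hxyn hh
    omega

def Sset (m : ℕ) : Finset (ℕ × ℕ) :=
  ((Finset.Icc 1 m) ×ˢ (Finset.Icc 1 m)).filter
    (fun p => m ≤ p.1 + p.2 ∧ p.1 + p.2 < 2*m)

def fmap (n : ℕ) [NeZero n] (q : Fin n × ℕ × ℕ) : Finset (Fin n) :=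
  {q.1, q.1 + ((q.2.1 : ℕ) : Fin n), q.1 + ((q.2.1 + q.2.2 : ℕ) : Fin n)}

lemma mem_Sset {m : ℕ} {p : ℕ × ℕ} :
    p ∈ Sset m ↔ (1 ≤ p.1 ∧ p.1 ≤ m ∧ 1 ≤ p.2 ∧ p.2 ≤ m ∧ m ≤ p.1 + p.2 ∧ p.1 + p.2 < 2*m) := by
  simp only [Sset, Finset.mem_filter, Finset.mem_product, Finset.mem_Icc]
  tauto

lemma fmap_good {m : ℕ} (hm : 2 ≤ m) (hn2 : n = 2 * m)
    (q : Fin n × ℕ × ℕ) (hq : q ∈ (Finset.univ ×ˢ Sset m)) :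
    (fmap n q).card = 3 ∧ (cycleGraph n).IsMutualVisibilitySet ↑(fmap n q) := by
  obtain ⟨a, x, y⟩ := q
  rw [Finset.mem_product, mem_Sset] at hq
  dsimp only at hq
  obtain ⟨-, hx1, hxm, hy1, hym, hmxy, hxy2m⟩ := hq
  constructor
  · exact triple_card a x y hx1 hy1 (by omega)
  · rw [mv_triple_iff (by omega) a x y (n - x - y) hx1 hy1 (by omega) (by omega)
      ↑(fmap n (a, x, y)) (by simp [fmap])]
    omega

lemma fiber_card {m : ℕ} (hm : 2 ≤ m) (hn2 : n = 2 * m) (X : Finset (Fin n))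
    (h3 : X.card = 3) (hMV : (cycleGraph n).IsMutualVisibilitySet ↑X) :
    ((Finset.univ ×ˢ Sset m).filter (fun q => fmap n q = X)).card = 3 := by
  have hn : 2 ≤ n := by omega
  obtain ⟨a, x, y, z, hx1, hy1, hz1, hsum, hX⟩ := exists_rep hn X h3
  have hbounds : 2*x ≤ n ∧ 2*y ≤ n ∧ 2*z ≤ n := by
    rw [← mv_triple_iff hn a x y z hx1 hy1 hz1 hsum ↑X (by rw [hX]; simp)]
    exact hMV
  obtain ⟨h2x, h2y, h2z⟩ := hbounds
  set b := a + ((x : ℕ) : Fin n) with hb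
  set c := a + ((x + y : ℕ) : Fin n) with hc
  have hrotb : ({b, b + ((y : ℕ) : Fin n), b + ((y + z : ℕ) : Fin n)} : Finset (Fin n))
      = X := by rw [hX]; exact rot_eq a x y z hsum
  have hcbc : c = b + ((y : ℕ) : Fin n) := by rw [hb, hc]; push_cast; ring
  have hrotc : ({c, c + ((z : ℕ) : Fin n), c + ((z + x : ℕ) : Fin n)} : Finset (Fin n))
      = X := by
    rw [hcbc, ← hrotb]
    exact rot_eq b y z x (by omega)
  have hab : a ≠ b := (add_cast_ne a x hx1 (by omega)).symm
  have hac : a ≠ c := (add_cast_ne a (x+y) (by omega) (by omega)).symm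
  have hbc : b ≠ c := by
    intro hh
    have := fin_add_inj a (by omega : x < n) (by omega : x + y < n) hh
    omega
  have hfiber : ((Finset.univ ×ˢ Sset m).filter (fun q => fmap n q = X))
      = {(a, x, y), (b, (y, z)), (c, (z, x))} := by
    ext ⟨a', x', y'⟩
    simp only [Finset.mem_filter, Finset.mem_product, Finset.mem_univ, true_and,
      Finset.mem_insert, Finset.mem_singleton, Prod.mk.injEq]
    constructor
    · rintro ⟨hS, hf⟩
      rw [mem_Sset] at hS
      dsimp only at hS
      obtain ⟨hx'1, hx'm, hy'1, hy'm, hmxy', hxy'2m⟩ := hS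
      have ha'mem : a' ∈ X := by
        rw [← hf]; simp [fmap]
      rw [hX] at ha'mem
      simp only [Finset.mem_insert, Finset.mem_singleton] at ha'mem
      have hf' : ({a', a' + ((x' : ℕ) : Fin n), a' + ((x' + y' : ℕ) : Fin n)} : Finset (Fin n)) = X := hf
      rcases ha'mem with rfl | h' | h'
      · left
        have := rep_unique a' x y z x' y' hx1 hy1 hz1 hsum hx'1 hy'1 (by omega)
          (by rw [hf', hX])
        exact ⟨rfl, this.1, this.2⟩
      · right; left
        subst h'
        have := rep_unique b y z x x' y' hy1 hz1 hx1 (by omega) hx'1 hy'1 (by omega)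
          (by rw [hf']; exact hrotb.symm)
        exact ⟨rfl, this.1, this.2⟩
      · right; right
        subst h'
        have := rep_unique c z x y x' y' hz1 hx1 hy1 (by omega) hx'1 hy'1 (by omega)
          (by rw [hf']; exact hrotc.symm)
        exact ⟨rfl, this.1, this.2⟩
    · rintro (⟨rfl, rfl, rfl⟩ | ⟨rfl, rfl, rfl⟩ | ⟨rfl, rfl, rfl⟩)
      · exact ⟨mem_Sset.mpr (by dsimp only; omega), by rw [hX]; rfl⟩
      · exact ⟨mem_Sset.mpr (by dsimp only; omega), by rw [← hrotb]; rfl⟩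
      · exact ⟨mem_Sset.mpr (by dsimp only; omega), by rw [← hrotc]; rfl⟩
  rw [hfiber]
  rw [Finset.card_insert_of_notMem (by
        simp only [Finset.mem_insert, Finset.mem_singleton, Prod.mk.injEq, not_or]
        exact ⟨fun h => absurd h.1 hab, fun h => absurd h.1 hac⟩),
    Finset.card_insert_of_notMem (by
        simp only [Finset.mem_singleton, Prod.mk.injEq, not_or]
        exact fun h => absurd h.1 hbc),
    Finset.card_singleton]

lemma gauss_aux (k : ℕ) : 2 * (∑ x ∈ Finset.Icc 1 k, (x+1)) = k*k + 3*k := by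
  induction k with
  | zero => simp
  | succ k ih =>
      rw [Finset.sum_Icc_succ_top (by omega : 1 ≤ k + 1)]
      ring_nf
      ring_nf at ih
      nlinarith [ih]

lemma Sset_card (j : ℕ) : 2 * (Sset (j+2)).card = (j+1)*(j+6) := by
  set m := j + 2 with hm
  have h1 : (Sset m).card
      = ∑ x ∈ Finset.Icc 1 m, ((Finset.Icc 1 m).filter
          (fun y => m ≤ x + y ∧ x + y < 2*m)).card := by
    rw [Sset, Finset.card_filter, Finset.sum_product]
    refine Finset.sum_congr rfl (fun x _ => ?_)
    rw [Finset.card_filter]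
  have h2 : ∀ x ∈ Finset.Icc 1 m, ((Finset.Icc 1 m).filter
      (fun y => m ≤ x + y ∧ x + y < 2*m)).card
      = min m (2*m-1-x) + 1 - max 1 (m-x) := by
    intro x hx
    rw [Finset.mem_Icc] at hx
    have : (Finset.Icc 1 m).filter (fun y => m ≤ x + y ∧ x + y < 2*m)
        = Finset.Icc (max 1 (m-x)) (min m (2*m-1-x)) := by
      ext t
      simp only [Finset.mem_filter, Finset.mem_Icc, le_min_iff, max_le_iff,
        min_le_iff, le_max_iff]
      omega
    rw [this, Nat.card_Icc]
  rw [h1, Finset.sum_congr rfl h2]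
  rw [show m = (m - 1) + 1 by omega]
  rw [Finset.sum_Icc_succ_top (by omega : 1 ≤ (m-1)+1)]
  have h3 : ∀ x ∈ Finset.Icc 1 (m-1),
      min ((m-1)+1) (2*((m-1)+1)-1-x) + 1 - max 1 (((m-1)+1)-x) = x + 1 := by
    intro x hx
    rw [Finset.mem_Icc] at hx
    omega
  rw [Finset.sum_congr rfl h3]
  have h4 : min ((m-1)+1) (2*((m-1)+1)-1-((m-1)+1)) + 1 - max 1 (((m-1)+1)-((m-1)+1))
      = m - 1 := by omega
  rw [h4]
  have h5 := gauss_aux (m - 1)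
  have hm1 : m - 1 = j + 1 := by omega
  rw [hm1] at h5 ⊢
  rw [Nat.mul_add, h5]
  ring_nf

lemma good_card {m : ℕ} (hm : 2 ≤ m) (hn2 : n = 2 * m)
    (good : Finset (Finset (Fin n)))
    (hgood : ∀ X, X ∈ good ↔
      (X.card = 3 ∧ (cycleGraph n).IsMutualVisibilitySet ↑X)) :
    3 * good.card = n * (Sset m).card := by
  have key := Finset.card_eq_sum_card_fiberwise
    (f := fmap n) (s := Finset.univ ×ˢ Sset m) (t := good)
    (fun q hq => (hgood _).mpr (fmap_good hm hn2 q hq))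
  rw [Finset.card_product, Finset.card_univ, Fintype.card_fin] at key
  rw [Finset.sum_congr rfl (fun X hX => by
      obtain ⟨h3, hMV⟩ := (hgood X).mp hX
      exact fiber_card hm hn2 X h3 hMV)] at key
  rw [Finset.sum_const, smul_eq_mul] at key
  omega

theorem rmu_even_cycle (n : ℕ) (hn : 4 ≤ n) (heven : Even n) :
    24 * rmuC n = (n - 2) * n * (n + 8) := by
  obtain ⟨m, hm2⟩ := heven
  have hn2 : n = 2 * m := by omega
  obtain ⟨j, hj⟩ : ∃ j, m = j + 2 := ⟨m - 2, by omega⟩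
  haveI : NeZero n := ⟨by omega⟩
  have hgc : 3 * rmuC n = n * (Sset m).card := by
    classical
    rw [rmuC]
    apply good_card (by omega) hn2
    intro X
    rw [Finset.mem_filter]
    simp only [Finset.mem_univ, true_and]
  have hS := Sset_card j
  rw [← hj] at hS
  have h24 : 24 * rmuC n = 4 * n * (2 * (Sset m).card) := by
    calc 24 * rmuC n = 8 * (3 * rmuC n) := by ring
      _ = 8 * (n * (Sset m).card) := by rw [hgc]
      _ = 4 * n * (2 * (Sset m).card) := by ring
  have hnj : n = 2*j+4 := by omega
  rw [h24, hS, hnj, show 2*j+4-2 = 2*j+2 by omega]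
  ring
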